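/- An abelian group of squarefree finite exponent n is a C-group: every subgroup has a permutable complement. -/

import Mathlib

open Pointwise

/-- An abelian group of squarefree finite exponent is a C-group: every subgroup has a
permutable complement. -/
theorem stmt16 {G : Type*} [CommGroup G] (n : ℕ) (hn : Squarefree n)
    (hexp : ∀ g : G, g ^ n = 1) :
    ∀ H : Subgroup G, ∃ K : Subgroup G,
      (H : Set G) * (K : Set G) = Set.univ ∧ H ⊓ K = ⊥ := by
  intro H
  haveI : NeZero n := ⟨hn.ne_zero⟩
  haveI : Fact (Squarefree n) := ⟨hn⟩
  have hsmul : ∀ x : Additive G, n • x = 0 := by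
    intro x
    have : Additive.toMul x ^ n = 1 := hexp _
    exact this
  haveI : Module (ZMod n) (Additive G) := AddCommGroup.zmodModule hsmul
  haveI : IsSemisimpleRing (ZMod n) := IsArtinianRing.isSemisimpleRing_of_isReduced (ZMod n)
  let e : Subgroup G ≃o Submodule (ZMod n) (Additive G) :=
    (Subgroup.toAddSubgroup (G := G)).trans (AddSubgroup.toZModSubmodule n)
  obtain ⟨P, hP⟩ := exists_isCompl (e H)
  refine ⟨e.symm P, ?_, ?_⟩
  · have hsup : H ⊔ e.symm P = ⊤ := by
      apply e.injective
      rw [map_sup, e.apply_symm_apply, map_top]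
      exact hP.sup_eq_top
    have hmul : ((H ⊔ e.symm P : Subgroup G) : Set G) = (H : Set G) * (e.symm P : Set G) :=
      Subgroup.mul_normal H (e.symm P)
    rw [hsup] at hmul
    rw [← hmul]
    rfl
  · apply e.injective
    rw [map_inf, e.apply_symm_apply, map_bot]
    exact hP.inf_eq_bot
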